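/- Let E be a complex Banach space, p ∈ (1,∞), T > 0, and let B be the derivative operator on L^p(0,T;E) with domain { f ∈ W^{1,p}(0,T;E) : f(0) = 0 }, so that ((B+λ)⁻¹g)(t) = ∫_0^t e^{λ(x−t)} g(x) dx. Then for every k ∈ ℝ and every g ∈ L^p(0,T;E), ‖(B+λ)⁻¹ g‖_{L^p(0,T;E)} → 0 as |λ| → ∞ with Re(λ) ≥ k. -/

import Mathlib

open Complex MeasureTheory Set Filter
open scoped ENNReal NNReal

set_option linter.unusedSectionVars false

noncomputable section

variable {E : Type*} [NormedAddCommGroup E] [NormedSpace ℂ E] [CompleteSpace E]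

/-- `((B+λ)⁻¹ g)(t) = ∫_0^t e^{λ(x-t)} g(x) dx`, the resolvent of the first derivative
`B = ∂_t` on `L^p(0,T;E)` with domain `{f ∈ W^{1,p}(0,T;E) : f(0) = 0}`. -/
def resD (lam : ℂ) (g : ℝ → E) (t : ℝ) : E :=
  ∫ x in (0 : ℝ)..t, Complex.exp (lam * ((x : ℂ) - (t : ℂ))) • g x

/-- `f ∈ W^{1,p}(0,T;E)` with (distributional) derivative `f'`: both belong to
`L^p(0,T;E)` and `f` is the primitive of `f'` (absolutely continuous representative). -/
def MemW1p (p : ℝ≥0∞) (T : ℝ) (f f' : ℝ → E) : Prop :=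
  MemLp f p (volume.restrict (Ioo 0 T)) ∧
  MemLp f' p (volume.restrict (Ioo 0 T)) ∧
  ∀ t ∈ Icc (0 : ℝ) T, f t = f 0 + ∫ s in (0 : ℝ)..t, f' s

/-- The bound `(1 - e^{-Re(λ)T})/Re(λ)`, interpreted as `T` when `Re(λ) = 0`. -/
def resBound (r T : ℝ) : ℝ :=
  if r = 0 then T else (1 - Real.exp (-r * T)) / r

lemma ker_norm_le {k T : ℝ} (hT : 0 ≤ T) {lam : ℂ} (hk : k ≤ lam.re) {x t : ℝ}
    (hx : 0 ≤ x) (hxt : x ≤ t) (htT : t ≤ T) :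
    ‖Complex.exp (lam * ((x:ℂ) - t))‖ ≤ Real.exp (|k| * T) := by
  rw [Complex.norm_exp]
  apply Real.exp_le_exp.2
  have hre : (lam * ((x:ℂ) - t)).re = lam.re * (x - t) := by
    simp [Complex.mul_re]
  rw [hre]
  rcases le_or_gt 0 lam.re with h | h
  · nlinarith [mul_nonneg h (sub_nonneg.2 hxt), mul_nonneg (abs_nonneg k) hT]
  · have h2 : -lam.re ≤ |k| := le_trans (by linarith) (neg_le_abs k)
    nlinarith [mul_le_mul h2 (by linarith : t - x ≤ T) (by linarith : (0:ℝ) ≤ t - x)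
      (abs_nonneg k)]

lemma ker_integrableOn {t : ℝ} (ht : 0 ≤ t) (lam : ℂ) {f : ℝ → E}
    (hf : IntegrableOn f (Ioc 0 t) volume) :
    IntegrableOn (fun x : ℝ => Complex.exp (lam * ((x:ℂ) - t)) • f x) (Ioc 0 t) volume := by
  have hker : Continuous fun x : ℝ => Complex.exp (lam * ((x:ℂ) - t)) :=
    Complex.continuous_exp.comp (continuous_const.mul (Complex.continuous_ofReal.sub
      continuous_const))
  refine Integrable.mono' (hf.norm.const_mul (Real.exp (|lam.re| * t)))
    (hker.aestronglyMeasurable.smul hf.aestronglyMeasurable) ?_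
  rw [ae_restrict_iff' measurableSet_Ioc]
  filter_upwards with x hx
  rw [norm_smul]
  have := ker_norm_le (k := lam.re) ht le_rfl hx.1.le hx.2 le_rfl
  exact mul_le_mul_of_nonneg_right (by simpa using this) (norm_nonneg _)

lemma resD_norm_le {k T : ℝ} (hT : 0 < T) {lam : ℂ} (hk : k ≤ lam.re) {t : ℝ}
    (ht : t ∈ Ioo 0 T) {f : ℝ → E} (hf : IntegrableOn f (Ioo 0 T) volume) :
    ‖resD lam f t‖ ≤ Real.exp (|k| * T) * ∫ x in Ioo 0 T, ‖f x‖ := by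
  set K := Real.exp (|k| * T) with hK
  have hsub : Ioc (0:ℝ) t ⊆ Ioo 0 T := fun x hx => ⟨hx.1, lt_of_le_of_lt hx.2 ht.2⟩
  have hf' : IntegrableOn f (Ioc 0 t) volume := hf.mono_set hsub
  rw [resD, intervalIntegral.integral_of_le ht.1.le]
  calc ‖∫ x in Ioc 0 t, Complex.exp (lam * ((x:ℂ) - t)) • f x‖
      ≤ ∫ x in Ioc 0 t, K * ‖f x‖ := by
        refine norm_integral_le_of_norm_le (hf'.norm.const_mul K) ?_
        rw [ae_restrict_iff' measurableSet_Ioc]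
        filter_upwards with x hx
        rw [norm_smul]
        exact mul_le_mul_of_nonneg_right
          (ker_norm_le hT.le hk hx.1.le hx.2 ht.2.le) (norm_nonneg _)
    _ ≤ ∫ x in Ioo 0 T, K * ‖f x‖ := by
        refine setIntegral_mono_set (hf.norm.const_mul K) ?_ (hsub.eventuallyLE)
        filter_upwards with x
        positivity
    _ = K * ∫ x in Ioo 0 T, ‖f x‖ := integral_const_mul _ _

lemma resD_deriv_bound {k T : ℝ} (hT : 0 < T) {lam : ℂ} (hlam : lam ≠ 0) (hk : k ≤ lam.re)
    {h h' : ℝ → E} (hd : ∀ x, HasDerivAt h (h' x) x) (hc : Continuous h')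
    {C₀ C₁ : ℝ} (hC₀ : ∀ x, ‖h x‖ ≤ C₀) (hC₁ : ∀ x, ‖h' x‖ ≤ C₁)
    {t : ℝ} (ht : t ∈ Ioo 0 T) :
    ‖resD lam h t‖ ≤ (Real.exp (|k| * T) * (C₀ + C₀ + T * C₁)) / ‖lam‖ := by
  set K := Real.exp (|k| * T) with hKdef
  have hK1 : 1 ≤ K := Real.one_le_exp (by positivity)
  have hC₀0 : 0 ≤ C₀ := le_trans (norm_nonneg _) (hC₀ 0)
  have hC₁0 : 0 ≤ C₁ := le_trans (norm_nonneg _) (hC₁ 0)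
  have hlam0 : (0:ℝ) < ‖lam‖ := norm_pos_iff.2 hlam
  have hconth : Continuous h := by
    refine continuous_iff_continuousAt.2 fun x => (hd x).continuousAt
  have hker : Continuous fun x : ℝ => Complex.exp (lam * ((x:ℂ) - t)) :=
    Complex.continuous_exp.comp (continuous_const.mul (Complex.continuous_ofReal.sub
      continuous_const))
  set c : ℝ → ℂ := fun x => lam⁻¹ * Complex.exp (lam * ((x:ℂ) - t)) with hcdef
  have hcder : ∀ x : ℝ, HasDerivAt c (Complex.exp (lam * ((x:ℂ) - t))) x := by
    intro x
    have h1 : HasDerivAt (fun x : ℝ => lam * ((x:ℂ) - t)) lam x := by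
      have h0 : HasDerivAt (fun x : ℝ => (x:ℂ)) 1 x := by
        simpa using (hasDerivAt_id x).ofReal_comp
      simpa using (h0.sub_const (t:ℂ)).const_mul lam
    have h3 := h1.cexp.const_mul lam⁻¹
    rw [mul_comm (cexp _) lam, ← mul_assoc, inv_mul_cancel₀ hlam, one_mul] at h3
    exact h3
  have hF : ∀ x : ℝ, HasDerivAt (fun y => c y • h y)
      (c x • h' x + Complex.exp (lam * ((x:ℂ) - t)) • h x) x :=
    fun x => (hcder x).smul (hd x)
  have hcontF' : Continuous fun x : ℝ =>
      c x • h' x + Complex.exp (lam * ((x:ℂ) - t)) • h x :=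
    ((continuous_const.mul hker).smul hc).add (hker.smul hconth)
  have key : (∫ x in (0:ℝ)..t, (c x • h' x + Complex.exp (lam * ((x:ℂ) - t)) • h x))
      = c t • h t - c 0 • h 0 :=
    intervalIntegral.integral_eq_sub_of_hasDerivAt (fun x _ => hF x)
      (hcontF'.intervalIntegrable _ _)
  have split : (∫ x in (0:ℝ)..t, (c x • h' x + Complex.exp (lam * ((x:ℂ) - t)) • h x))
      = (∫ x in (0:ℝ)..t, c x • h' x) + resD lam h t := by
    rw [resD]
    exact intervalIntegral.integral_add (((continuous_const.mul hker).smul hc).intervalIntegrable _ _)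
      ((hker.smul hconth).intervalIntegrable _ _)
  have heq : resD lam h t = c t • h t - c 0 • h 0 - ∫ x in (0:ℝ)..t, c x • h' x := by
    rw [← key, split]; abel
  have hct : ‖c t‖ = ‖lam‖⁻¹ := by
    simp [hcdef, norm_mul]
  have hc0 : ‖c 0‖ ≤ ‖lam‖⁻¹ * K := by
    rw [hcdef]
    simp only [norm_mul, norm_inv]
    exact mul_le_mul_of_nonneg_left
      (ker_norm_le hT.le hk le_rfl ht.1.le ht.2.le) (by positivity)
  have hcx : ∀ x : ℝ, 0 ≤ x → x ≤ t → ‖c x‖ ≤ ‖lam‖⁻¹ * K := by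
    intro x hx hxt
    rw [hcdef]
    simp only [norm_mul, norm_inv]
    exact mul_le_mul_of_nonneg_left
      (ker_norm_le hT.le hk hx hxt ht.2.le) (by positivity)
  have hint : ‖∫ x in (0:ℝ)..t, c x • h' x‖ ≤ (‖lam‖⁻¹ * K * C₁) * T := by
    have hb : ∀ x ∈ Set.uIoc (0:ℝ) t, ‖c x • h' x‖ ≤ ‖lam‖⁻¹ * K * C₁ := by
      intro x hx
      rw [Set.uIoc_of_le ht.1.le] at hx
      rw [norm_smul]
      exact mul_le_mul (hcx x hx.1.le hx.2) (hC₁ x) (norm_nonneg _) (by positivity)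
    calc ‖∫ x in (0:ℝ)..t, c x • h' x‖ ≤ (‖lam‖⁻¹ * K * C₁) * |t - 0| :=
          intervalIntegral.norm_integral_le_of_norm_le_const hb
      _ ≤ (‖lam‖⁻¹ * K * C₁) * T := by
          rw [sub_zero, abs_of_pos ht.1]
          exact mul_le_mul_of_nonneg_left ht.2.le (by positivity)
  rw [heq]
  have h1 : ‖c t • h t‖ ≤ ‖lam‖⁻¹ * C₀ := by
    rw [norm_smul, hct]
    exact mul_le_mul_of_nonneg_left (hC₀ t) (by positivity)
  have h2 : ‖c 0 • h 0‖ ≤ ‖lam‖⁻¹ * K * C₀ := by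
    rw [norm_smul]
    exact mul_le_mul hc0 (hC₀ 0) (norm_nonneg _) (by positivity)
  have tri : ‖c t • h t - c 0 • h 0 - ∫ x in (0:ℝ)..t, c x • h' x‖ ≤
      ‖c t • h t‖ + ‖c 0 • h 0‖ + ‖∫ x in (0:ℝ)..t, c x • h' x‖ := by
    calc ‖c t • h t - c 0 • h 0 - ∫ x in (0:ℝ)..t, c x • h' x‖
        ≤ ‖c t • h t - c 0 • h 0‖ + ‖∫ x in (0:ℝ)..t, c x • h' x‖ := norm_sub_le _ _
      _ ≤ ‖c t • h t‖ + ‖c 0 • h 0‖ + ‖∫ x in (0:ℝ)..t, c x • h' x‖ := by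
          have := norm_sub_le (c t • h t) (c 0 • h 0)
          linarith
  have hKC : ‖lam‖⁻¹ * C₀ ≤ ‖lam‖⁻¹ * (K * C₀) := by
    apply mul_le_mul_of_nonneg_left _ (by positivity)
    nlinarith
  rw [div_eq_inv_mul]
  calc ‖c t • h t - c 0 • h 0 - ∫ x in (0:ℝ)..t, c x • h' x‖
      ≤ ‖lam‖⁻¹ * C₀ + ‖lam‖⁻¹ * K * C₀ + ‖lam‖⁻¹ * K * C₁ * T := by linarith
    _ ≤ ‖lam‖⁻¹ * (K * (C₀ + C₀ + T * C₁)) := by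
        rw [mul_add, mul_add]
        have e1 : ‖lam‖⁻¹ * K * C₀ = ‖lam‖⁻¹ * (K * C₀) := by ring
        have e2 : ‖lam‖⁻¹ * K * C₁ * T = ‖lam‖⁻¹ * (K * (T * C₁)) := by ring
        rw [e1, e2] at *
        linarith [hKC]

lemma mollify {h : ℝ → E} (hcont : Continuous h) {δ : ℝ} (hδ : 0 < δ) :
    ∃ hm hm' : ℝ → E, (∀ x, HasDerivAt hm (hm' x) x) ∧ Continuous hm' ∧
      (∀ C₀, (∀ x, ‖h x‖ ≤ C₀) → ∀ x, ‖hm x‖ ≤ C₀) ∧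
      (∀ C₀, (∀ x, ‖h x‖ ≤ C₀) → ∀ x, ‖hm' x‖ ≤ δ⁻¹ * (C₀ + C₀)) ∧
      (∀ ω, 0 ≤ ω → (∀ u v : ℝ, |u - v| ≤ δ → ‖h u - h v‖ ≤ ω) →
        ∀ x, ‖hm x - h x‖ ≤ ω) := by
  set H : ℝ → E := fun y => ∫ u in (0:ℝ)..y, h u with hHdef
  have hH : ∀ y, HasDerivAt H (h y) y := fun y =>
    intervalIntegral.integral_hasDerivAt_right (hcont.intervalIntegrable _ _)
      (hcont.stronglyMeasurableAtFilter _ _) hcont.continuousAt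
  refine ⟨fun x => δ⁻¹ • (H (x + δ) - H x), fun x => δ⁻¹ • (h (x + δ) - h x),
    ?_, ?_, ?_, ?_, ?_⟩
  · intro x
    have h1 : HasDerivAt (fun x : ℝ => H (x + δ)) (h (x + δ)) x := by
      have := HasDerivAt.scomp (x := x) (hH (x + δ)) ((hasDerivAt_id x).add_const δ)
      simpa [Function.comp_def] using this
    exact (h1.sub (hH x)).const_smul δ⁻¹
  · exact ((hcont.comp (continuous_id.add continuous_const)).sub hcont).const_smul _
  · intro C₀ hC₀ x
    have hrep : H (x + δ) - H x = ∫ u in x..(x + δ), h u :=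
      intervalIntegral.integral_interval_sub_left (hcont.intervalIntegrable _ _)
        (hcont.intervalIntegrable _ _)
    show ‖(δ:ℝ)⁻¹ • (H (x + δ) - H x)‖ ≤ C₀
    rw [hrep, norm_smul]
    have hb : ‖∫ u in x..(x + δ), h u‖ ≤ C₀ * |x + δ - x| :=
      intervalIntegral.norm_integral_le_of_norm_le_const fun u _ => hC₀ u
    have : |x + δ - x| = δ := by rw [add_sub_cancel_left, abs_of_pos hδ]
    rw [this] at hb
    calc ‖(δ:ℝ)⁻¹‖ * ‖∫ u in x..(x + δ), h u‖ ≤ δ⁻¹ * (C₀ * δ) := by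
          rw [Real.norm_eq_abs, abs_of_pos (inv_pos.2 hδ)]
          exact mul_le_mul_of_nonneg_left hb (by positivity)
      _ = C₀ := by field_simp
  · intro C₀ hC₀ x
    rw [norm_smul, Real.norm_eq_abs, abs_of_pos (inv_pos.2 hδ)]
    refine mul_le_mul_of_nonneg_left ?_ (by positivity)
    exact (norm_sub_le _ _).trans (add_le_add (hC₀ _) (hC₀ _))
  · intro ω hω hu x
    have hrep : H (x + δ) - H x = ∫ u in x..(x + δ), h u :=
      intervalIntegral.integral_interval_sub_left (hcont.intervalIntegrable _ _)
        (hcont.intervalIntegrable _ _)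
    have hconst : h x = δ⁻¹ • ∫ u in x..(x + δ), h x := by
      rw [intervalIntegral.integral_const, add_sub_cancel_left, smul_smul]
      rw [inv_mul_cancel₀ hδ.ne', one_smul]
    have heq : δ⁻¹ • (H (x + δ) - H x) - h x
        = δ⁻¹ • ∫ u in x..(x + δ), (h u - h x) := by
      rw [hrep, intervalIntegral.integral_sub (hcont.intervalIntegrable _ _)
        intervalIntegrable_const, smul_sub, ← hconst]
    show ‖(δ:ℝ)⁻¹ • (H (x + δ) - H x) - h x‖ ≤ ω
    rw [heq, norm_smul, Real.norm_eq_abs, abs_of_pos (inv_pos.2 hδ)]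
    have hb : ‖∫ u in x..(x + δ), (h u - h x)‖ ≤ ω * |x + δ - x| := by
      refine intervalIntegral.norm_integral_le_of_norm_le_const fun u hu' => ?_
      rw [Set.uIoc_of_le (by linarith)] at hu'
      refine hu u x ?_
      rw [abs_of_pos (by linarith [hu'.1] : 0 < u - x)]
      linarith [hu'.2]
    have : |x + δ - x| = δ := by rw [add_sub_cancel_left, abs_of_pos hδ]
    rw [this] at hb
    calc δ⁻¹ * ‖∫ u in x..(x + δ), (h u - h x)‖ ≤ δ⁻¹ * (ω * δ) := by
          exact mul_le_mul_of_nonneg_left hb (by positivity)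
      _ = ω := by field_simp

/-- **Riemann–Lebesgue type decay of the resolvent of `∂_t` (eq. (6) of the paper).**
For every `k ∈ ℝ` and every `g ∈ L^p(0,T;E)`:
`‖(B+λ)⁻¹ g‖_{L^p(0,T;E)} → 0` as `|λ| → ∞` with `Re(λ) ≥ k`. -/
theorem derivative_resolvent_decay
    {E : Type*} [NormedAddCommGroup E] [NormedSpace ℂ E] [CompleteSpace E]
    (p : ℝ≥0∞) (hp : 1 < p) (hp' : p ≠ ⊤) (T : ℝ) (hT : 0 < T)
    (k : ℝ) (g : ℝ → E) (hg : MemLp g p (volume.restrict (Ioo 0 T))) :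
    ∀ ε > (0 : ℝ), ∃ M : ℝ, ∀ lam : ℂ, k ≤ lam.re → M ≤ ‖lam‖ →
      eLpNorm (resD lam g) p (volume.restrict (Ioo 0 T)) ≤ ENNReal.ofReal ε := by
  intro ε hε
  have hμuniv : (volume.restrict (Ioo (0:ℝ) T)) Set.univ = ENNReal.ofReal T := by
    rw [Measure.restrict_apply_univ, Real.volume_Ioo, sub_zero]
  haveI : IsFiniteMeasure (volume.restrict (Ioo (0:ℝ) T)) :=
    ⟨by rw [hμuniv]; exact ENNReal.ofReal_lt_top⟩
  set a := p.toReal⁻¹ with hadef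
  have ha0 : 0 ≤ a := inv_nonneg.2 ENNReal.toReal_nonneg
  set Ta := T ^ a with hTadef
  have hTa0 : 0 < Ta := Real.rpow_pos_of_pos hT a
  set K := Real.exp (|k| * T) with hKdef
  have hK0 : 0 < K := Real.exp_pos _
  set g' := (Ioo (0:ℝ) T).indicator g with hg'def
  have hg'eq : ∀ x ∈ Ioo (0:ℝ) T, g' x = g x := fun x hx => indicator_of_mem hx g
  have hg1 : MemLp g' 1 volume := by
    rw [hg'def, memLp_indicator_iff_restrict measurableSet_Ioo]
    exact hg.mono_exponent hp.le
  have hg'int : Integrable g' volume := memLp_one_iff_integrable.1 hg1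
  set ε₂ := ε / (8 * Ta * K) with hε₂def
  have hε₂0 : 0 < ε₂ := by positivity
  obtain ⟨h, h_supp, h_close, h_cont, h_mem⟩ :=
    hg1.exists_hasCompactSupport_eLpNorm_sub_le ENNReal.one_ne_top
      (ε := ENNReal.ofReal ε₂) (by simp [ENNReal.ofReal_eq_zero]; linarith)
  have hhint : Integrable h volume := memLp_one_iff_integrable.1 h_mem
  have hsubint : Integrable (g' - h) volume := hg'int.sub hhint
  have l1 : ∫ x, ‖g' x - h x‖ ≤ ε₂ := by
    have h1 := ofReal_integral_norm_eq_lintegral_enorm hsubint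
    rw [← eLpNorm_one_eq_lintegral_enorm] at h1
    have h2 : ENNReal.ofReal (∫ x, ‖(g' - h) x‖) ≤ ENNReal.ofReal ε₂ := by
      rw [h1]; exact h_close
    rw [ENNReal.ofReal_le_ofReal_iff hε₂0.le] at h2
    simpa using h2
  obtain ⟨C₀, hC₀⟩ := h_supp.exists_bound_of_continuous h_cont
  have hC₀0 : 0 ≤ C₀ := le_trans (norm_nonneg _) (hC₀ 0)
  have hu := h_supp.uniformContinuous_of_continuous h_cont
  set ω := ε₂ / T with hωdef
  have hω0 : 0 < ω := by positivity
  obtain ⟨δ₀, hδ₀0, hδ₀⟩ := Metric.uniformContinuous_iff.1 hu ω hω0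
  set δ := δ₀ / 2 with hδdef
  have hδ0 : 0 < δ := by positivity
  obtain ⟨hm, hm', hmd, hm'cont, hmbd, hm'bd, hmclose⟩ := mollify h_cont hδ0
  have hmbd' : ∀ x, ‖hm x‖ ≤ C₀ := hmbd C₀ hC₀
  set C₁ := δ⁻¹ * (C₀ + C₀) with hC₁def
  have hm'bd' : ∀ x, ‖hm' x‖ ≤ C₁ := hm'bd C₀ hC₀
  have hclose : ∀ x, ‖hm x - h x‖ ≤ ω := by
    refine hmclose ω hω0.le (fun u v huv => ?_) 
    have hlt : dist u v < δ₀ := lt_of_le_of_lt (by simpa [Real.dist_eq] using huv)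
      (by linarith)
    exact le_of_lt (by simpa [dist_eq_norm] using hδ₀ hlt)
  set D := K * (C₀ + C₀ + T * C₁) with hDdef
  have hD0 : 0 ≤ D := by positivity
  refine ⟨max 1 (2 * Ta * D / ε + 1), fun lam hklam hMlam => ?_⟩
  have hlam1 : 1 ≤ ‖lam‖ := le_trans (le_max_left _ _) hMlam
  have hlamnorm : (0:ℝ) < ‖lam‖ := lt_of_lt_of_le one_pos hlam1
  have hlam0 : lam ≠ 0 := norm_pos_iff.1 hlamnorm
  have hmcont : Continuous hm := continuous_iff_continuousAt.2 fun x => (hmd x).continuousAt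
  have hmint : IntegrableOn hm (Ioo 0 T) volume :=
    (hmcont.integrableOn_Icc).mono_set Ioo_subset_Icc_self
  have hdiffint : IntegrableOn (fun x => g' x - hm x) (Ioo 0 T) volume :=
    hg'int.integrableOn.sub hmint
  have hsn : Integrable (fun x => ‖g' x - h x‖) (volume.restrict (Ioo (0:ℝ) T)) := by
    exact hsubint.norm.integrableOn (s := Ioo (0:ℝ) T)
  have l1' : (∫ x in Ioo (0:ℝ) T, ‖g' x - hm x‖) ≤ ε₂ + ε₂ := by
    have step1 : (∫ x in Ioo (0:ℝ) T, ‖g' x - hm x‖)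
        ≤ ∫ x in Ioo (0:ℝ) T, (‖g' x - h x‖ + ω) := by
      refine setIntegral_mono_on hdiffint.norm
        (hsn.add (integrableOn_const ?_))
        measurableSet_Ioo ?_
      · rw [Real.volume_Ioo]; exact ENNReal.ofReal_ne_top
      · intro x hx
        have e1 : g' x - hm x = (g' x - h x) - (hm x - h x) := by abel
        calc ‖g' x - hm x‖ ≤ ‖g' x - h x‖ + ‖hm x - h x‖ := by
              rw [e1]; exact norm_sub_le _ _
          _ ≤ ‖g' x - h x‖ + ω := by linarith [hclose x]
    have step2 : (∫ x in Ioo (0:ℝ) T, (‖g' x - h x‖ + ω))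
        = (∫ x in Ioo (0:ℝ) T, ‖g' x - h x‖) + ω * T := by
      rw [integral_add hsn (integrable_const ω), setIntegral_const]
      rw [measureReal_def, Real.volume_Ioo, sub_zero, ENNReal.toReal_ofReal hT.le, smul_eq_mul, mul_comm]
    have step3 : (∫ x in Ioo (0:ℝ) T, ‖g' x - h x‖) ≤ ε₂ := by
      refine le_trans ?_ l1
      have h4 := setIntegral_le_integral (μ := volume) (s := Ioo (0:ℝ) T) hsubint.norm
        (ae_of_all _ fun x => norm_nonneg _)
      simpa using h4
    have hωT : ω * T = ε₂ := by rw [hωdef]; field_simp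
    linarith
  have hpt : ∀ t ∈ Ioo (0:ℝ) T, ‖resD lam g t‖ ≤ D / ‖lam‖ + K * (ε₂ + ε₂) := by
    intro t ht
    have hgg' : resD lam g t = resD lam g' t := by
      rw [resD, resD]
      refine (intervalIntegral.integral_congr_ae ?_).symm
      filter_upwards with x hx
      rw [Set.uIoc_of_le ht.1.le] at hx
      have hxmem : x ∈ Ioo (0:ℝ) T := ⟨hx.1, lt_of_le_of_lt hx.2 ht.2⟩
      rw [hg'eq x hxmem]
    have hker : Continuous fun x : ℝ => Complex.exp (lam * ((x:ℂ) - t)) :=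
      Complex.continuous_exp.comp (continuous_const.mul (Complex.continuous_ofReal.sub
        continuous_const))
    have I1 : IntervalIntegrable
        (fun x : ℝ => Complex.exp (lam * ((x:ℂ) - t)) • g' x) volume 0 t := by
      rw [intervalIntegrable_iff_integrableOn_Ioc_of_le ht.1.le]
      exact ker_integrableOn ht.1.le lam hg'int.integrableOn
    have I2 : IntervalIntegrable
        (fun x : ℝ => Complex.exp (lam * ((x:ℂ) - t)) • hm x) volume 0 t :=
      (hker.smul hmcont).intervalIntegrable _ _
    have hsplit : resD lam (fun x => g' x - hm x) t = resD lam g' t - resD lam hm t := by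
      rw [resD, resD, resD]
      simp only [smul_sub]
      exact intervalIntegral.integral_sub I1 I2
    have b1 : ‖resD lam (fun x => g' x - hm x) t‖ ≤ K * (ε₂ + ε₂) := by
      refine le_trans (resD_norm_le hT hklam ht hdiffint) ?_
      exact mul_le_mul_of_nonneg_left l1' hK0.le
    have b2 : ‖resD lam hm t‖ ≤ D / ‖lam‖ :=
      resD_deriv_bound hT hlam0 hklam hmd hm'cont hmbd' hm'bd' ht
    have e2 : resD lam g t = resD lam (fun x => g' x - hm x) t + resD lam hm t := by
      rw [hgg', hsplit]; abel
    calc ‖resD lam g t‖ ≤ ‖resD lam (fun x => g' x - hm x) t‖ + ‖resD lam hm t‖ := by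
          rw [e2]; exact norm_add_le _ _
      _ ≤ K * (ε₂ + ε₂) + D / ‖lam‖ := add_le_add b1 b2
      _ = D / ‖lam‖ + K * (ε₂ + ε₂) := by ring
  have hfinal : eLpNorm (resD lam g) p (volume.restrict (Ioo 0 T))
      ≤ (volume.restrict (Ioo (0:ℝ) T)) Set.univ ^ p.toReal⁻¹
        * ENNReal.ofReal (D / ‖lam‖ + K * (ε₂ + ε₂)) := by
    refine eLpNorm_le_of_ae_bound ?_
    rw [ae_restrict_iff' measurableSet_Ioo]
    exact ae_of_all _ hpt
  have hreal : Ta * (D / ‖lam‖ + K * (ε₂ + ε₂)) ≤ ε := by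
    have hA : Ta * (D / ‖lam‖) ≤ ε / 2 := by
      rcases eq_or_lt_of_le hD0 with hD | hD
      · rw [← hD]; simp
        positivity
      · have h1 : 2 * Ta * D / ε + 1 ≤ ‖lam‖ := le_trans (le_max_right _ _) hMlam
        have h2 : ε * (2 * Ta * D / ε) = 2 * Ta * D := by field_simp
        have h3 := mul_le_mul_of_nonneg_left h1 hε.le
        rw [mul_div_assoc']
        rw [div_le_div_iff₀ hlamnorm two_pos]
        nlinarith
    have hB : Ta * (K * (ε₂ + ε₂)) = ε / 4 := by
      rw [hε₂def]; field_simp; ring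
    have expand : Ta * (D / ‖lam‖ + K * (ε₂ + ε₂))
        = Ta * (D / ‖lam‖) + Ta * (K * (ε₂ + ε₂)) := by ring
    rw [expand, hB]
    linarith
  calc eLpNorm (resD lam g) p (volume.restrict (Ioo 0 T))
      ≤ (volume.restrict (Ioo (0:ℝ) T)) Set.univ ^ p.toReal⁻¹
        * ENNReal.ofReal (D / ‖lam‖ + K * (ε₂ + ε₂)) := hfinal
    _ = ENNReal.ofReal (Ta * (D / ‖lam‖ + K * (ε₂ + ε₂))) := by
        rw [hμuniv, ENNReal.ofReal_rpow_of_pos hT,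
          ← ENNReal.ofReal_mul (by positivity : (0:ℝ) ≤ T ^ p.toReal⁻¹)]
    _ ≤ ENNReal.ofReal ε := ENNReal.ofReal_le_ofReal hreal

end
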